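/- For every odd natural number p ≥ 3, the polynomial identity X^p + 1 = Σ_{k=0}^{(p−1)/2} (−1)^k · (p/(p−k)) · C(p−k, k) · X^k · (X+1)^{p−2k} holds in ℚ[X]. -/

import Mathlib

open Polynomial Finset

noncomputable def Aux (n : ℕ) : ℚ[X] :=
  ∑ k ∈ Finset.range (n + 1),
    Polynomial.C ((-1 : ℚ) ^ k * ((n - k).choose k : ℚ)) * X ^ k * (X + 1) ^ (n - 2 * k)

lemma term_split (n j : ℕ) (hj : j ≤ n + 1) :
    Polynomial.C ((-1 : ℚ) ^ (j+1) * (((n+2) - (j+1)).choose (j+1) : ℚ)) * X ^ (j+1) *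
        (X + 1) ^ ((n+2) - 2 * (j+1))
      = (X + 1) * (Polynomial.C ((-1 : ℚ) ^ (j+1) * (((n+1) - (j+1)).choose (j+1) : ℚ)) *
            X ^ (j+1) * (X + 1) ^ ((n+1) - 2 * (j+1)))
        - X * (Polynomial.C ((-1 : ℚ) ^ j * ((n - j).choose j : ℚ)) * X ^ j *
            (X + 1) ^ (n - 2 * j)) := by
  rcases le_or_gt (2 * j + 1) n with h | h
  · have e1 : (n + 2) - (j + 1) = (n - j) + 1 := by omega
    have e2 : (n + 1) - (j + 1) = n - j := by omega
    have e3 : (n + 2) - 2 * (j + 1) = n - 2 * j := by omega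
    have e4 : (n + 1) - 2 * (j + 1) + 1 = n - 2 * j := by omega
    rw [e1, e2, e3, Nat.choose_succ_succ' (n - j) j]
    rw [← e4, pow_succ]
    push_cast
    simp only [Polynomial.C_mul, Polynomial.C_add, Polynomial.C_pow, Polynomial.C_neg,
      Polynomial.C_1]
    ring
  · rcases eq_or_lt_of_le (by omega : n ≤ 2 * j) with h2 | h2
    · have e1 : (n + 2) - (j + 1) = j + 1 := by omega
      have e2 : (n + 2) - 2 * (j + 1) = 0 := by omega
      have e3 : (n + 1) - (j + 1) = j := by omega
      have e4 : (n - j) = j := by omega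
      have e5 : n - 2 * j = 0 := by omega
      rw [e1, e2, e3, e4, e5, Nat.choose_self, Nat.choose_succ_self, Nat.choose_self]
      push_cast
      simp only [Polynomial.C_mul, Polynomial.C_pow, Polynomial.C_neg, Polynomial.C_1,
        Polynomial.C_0, mul_zero, zero_mul, pow_zero]
      ring
    · have c1 : ((n + 2) - (j + 1)).choose (j + 1) = 0 :=
        Nat.choose_eq_zero_of_lt (by omega)
      have c2 : ((n + 1) - (j + 1)).choose (j + 1) = 0 :=
        Nat.choose_eq_zero_of_lt (by omega)
      have c3 : (n - j).choose j = 0 := Nat.choose_eq_zero_of_lt (by omega)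
      rw [c1, c2, c3]
      push_cast
      simp

lemma Aux_rec (n : ℕ) : Aux (n + 2) = (X + 1) * Aux (n + 1) - X * Aux n := by
  unfold Aux
  rw [Finset.sum_range_succ' (fun k => Polynomial.C ((-1 : ℚ) ^ k *
      (((n+2) - k).choose k : ℚ)) * X ^ k * (X + 1) ^ ((n+2) - 2 * k)) (n + 2)]
  have hsplit : ∀ j ∈ Finset.range (n + 2),
      Polynomial.C ((-1 : ℚ) ^ (j+1) * (((n+2) - (j+1)).choose (j+1) : ℚ)) * X ^ (j+1) *
        (X + 1) ^ ((n+2) - 2 * (j+1))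
      = (X + 1) * (Polynomial.C ((-1 : ℚ) ^ (j+1) * (((n+1) - (j+1)).choose (j+1) : ℚ)) *
            X ^ (j+1) * (X + 1) ^ ((n+1) - 2 * (j+1)))
        - X * (Polynomial.C ((-1 : ℚ) ^ j * ((n - j).choose j : ℚ)) * X ^ j *
            (X + 1) ^ (n - 2 * j)) := by
    intro j hj
    exact term_split n j (by simpa using Nat.lt_succ_iff.mp (Finset.mem_range.mp hj))
  rw [Finset.sum_congr rfl hsplit]
  rw [Finset.sum_range_succ (fun j =>
      (X + 1) * (Polynomial.C ((-1 : ℚ) ^ (j+1) * (((n+1) - (j+1)).choose (j+1) : ℚ)) *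
            X ^ (j+1) * (X + 1) ^ ((n+1) - 2 * (j+1)))
        - X * (Polynomial.C ((-1 : ℚ) ^ j * ((n - j).choose j : ℚ)) * X ^ j *
            (X + 1) ^ (n - 2 * j))) (n + 1)]
  have hlast : (X + 1) * (Polynomial.C ((-1 : ℚ) ^ (n+1+1) *
        (((n+1) - (n+1+1)).choose (n+1+1) : ℚ)) * X ^ (n+1+1) *
        (X + 1) ^ ((n+1) - 2 * (n+1+1)))
      - X * (Polynomial.C ((-1 : ℚ) ^ (n+1) * ((n - (n+1)).choose (n+1) : ℚ)) * X ^ (n+1) *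
            (X + 1) ^ (n - 2 * (n+1))) = 0 := by
    have c1 : ((n+1) - (n+1+1)).choose (n+1+1) = 0 := Nat.choose_eq_zero_of_lt (by omega)
    have c2 : (n - (n+1)).choose (n+1) = 0 := Nat.choose_eq_zero_of_lt (by omega)
    rw [c1, c2]
    simp
  rw [hlast, add_zero, Finset.sum_sub_distrib, ← Finset.mul_sum, ← Finset.mul_sum]
  rw [Finset.sum_range_succ' (fun k => Polynomial.C ((-1 : ℚ) ^ k *
      (((n+1) - k).choose k : ℚ)) * X ^ k * (X + 1) ^ ((n+1) - 2 * k)) (n + 1)]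
  have h0 : Polynomial.C ((-1 : ℚ) ^ 0 * (((n+2) - 0).choose 0 : ℚ)) * X ^ 0 *
      (X + 1) ^ ((n+2) - 2 * 0) = (X + 1) * (Polynomial.C ((-1 : ℚ) ^ 0 *
      (((n+1) - 0).choose 0 : ℚ)) * X ^ 0 * (X + 1) ^ ((n+1) - 2 * 0)) := by
    simp only [pow_zero, Nat.choose_zero_right, Nat.cast_one, mul_one, one_mul,
      Nat.sub_zero, Nat.mul_zero, map_one]
    rw [show n + 2 = (n + 1) + 1 by omega, pow_succ]
    ring
  rw [h0]
  ring

lemma Aux_eq_geom (n : ℕ) : Aux n = ∑ j ∈ Finset.range (n + 1), (X : ℚ[X]) ^ j := by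
  induction n using Nat.twoStepInduction with
  | zero => simp [Aux]
  | one =>
    unfold Aux
    rw [Finset.sum_range_succ, Finset.sum_range_succ, Finset.sum_range_succ]
    norm_num
    ring
  | more n ih1 ih2 =>
    rw [Aux_rec, ih1, ih2]
    rw [Finset.sum_range_succ (fun j => (X : ℚ[X]) ^ j) (n + 1 + 1),
      Finset.sum_range_succ (fun j => (X : ℚ[X]) ^ j) (n + 1)]
    ring

lemma coeff_split (p k : ℕ) (hk : k < p) (hk1 : 1 ≤ k) :
    (p : ℚ) / ((p : ℚ) - (k : ℚ)) * ((p - k).choose k : ℚ)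
      = ((p - k).choose k : ℚ) + ((p - k - 1).choose (k - 1) : ℚ) := by
  have hne : (p : ℚ) - (k : ℚ) ≠ 0 := by
    have : (k : ℚ) < (p : ℚ) := by exact_mod_cast hk
    linarith
  have key : (p - k) * ((p - k - 1).choose (k - 1)) = ((p - k).choose k) * k := by
    have h1 : (p - k - 1) + 1 = p - k := by omega
    have h2 : (k - 1) + 1 = k := by omega
    have := Nat.add_one_mul_choose_eq (p - k - 1) (k - 1)
    rwa [h1, h2] at this
  have keyQ : ((p : ℚ) - (k : ℚ)) * ((p - k - 1).choose (k - 1) : ℚ)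
      = ((p - k).choose k : ℚ) * (k : ℚ) := by
    have hcast : ((p - k : ℕ) : ℚ) = (p : ℚ) - (k : ℚ) := by
      have := Nat.cast_sub (R := ℚ) hk.le
      exact_mod_cast this
    rw [← hcast]
    exact_mod_cast key
  field_simp
  nlinarith [keyQ]

theorem expansion_explicit (p : ℕ) (hp : Odd p) (hp3 : 3 ≤ p) :
    (X ^ p + 1 : ℚ[X]) =
      ∑ k ∈ Finset.range ((p - 1) / 2 + 1),
        Polynomial.C ((-1 : ℚ) ^ k * ((p : ℚ) / ((p : ℚ) - (k : ℚ))) *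
            (Nat.choose (p - k) k : ℚ)) *
          X ^ k * (X + 1) ^ (p - 2 * k) := by
  obtain ⟨m, hm⟩ := hp
  set M := (p - 1) / 2 with hM
  have hsplit : ∀ k ∈ Finset.range (M + 1),
      Polynomial.C ((-1 : ℚ) ^ k * ((p : ℚ) / ((p : ℚ) - (k : ℚ))) *
          ((p - k).choose k : ℚ)) * X ^ k * (X + 1) ^ (p - 2 * k)
        = Polynomial.C ((-1 : ℚ) ^ k * ((p - k).choose k : ℚ)) * X ^ k * (X + 1) ^ (p - 2 * k)
          + Polynomial.C ((-1 : ℚ) ^ k *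
              (if k = 0 then 0 else ((p - k - 1).choose (k - 1) : ℚ))) * X ^ k *
              (X + 1) ^ (p - 2 * k) := by
    intro k hk
    have hk' : k ≤ M := Nat.lt_succ_iff.mp (Finset.mem_range.mp hk)
    rcases Nat.eq_zero_or_pos k with rfl | hk1
    · have hpne : (p : ℚ) ≠ 0 := by positivity
      simp [div_self hpne]
    · have hkp : k < p := by omega
      rw [if_neg (by omega)]
      rw [show ((-1 : ℚ) ^ k * ((p : ℚ) / ((p : ℚ) - (k : ℚ))) * ((p - k).choose k : ℚ))
          = (-1 : ℚ) ^ k * (((p : ℚ) / ((p : ℚ) - (k : ℚ))) * ((p - k).choose k : ℚ)) from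
        mul_assoc _ _ _]
      rw [coeff_split p k hkp hk1, mul_add, Polynomial.C_add, add_mul, add_mul]
  rw [Finset.sum_congr rfl hsplit, Finset.sum_add_distrib]
  have hS1 : (∑ k ∈ Finset.range (M + 1),
      Polynomial.C ((-1 : ℚ) ^ k * ((p - k).choose k : ℚ)) * X ^ k * (X + 1) ^ (p - 2 * k))
      = Aux p := by
    unfold Aux
    apply Finset.sum_subset
    · intro x hx
      simp only [Finset.mem_range] at hx ⊢
      omega
    · intro x hx hx'
      simp only [Finset.mem_range] at hx hx'
      have : (p - x).choose x = 0 := Nat.choose_eq_zero_of_lt (by omega)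
      simp [this]
  have hS2 : (∑ k ∈ Finset.range (M + 1),
      Polynomial.C ((-1 : ℚ) ^ k *
          (if k = 0 then 0 else ((p - k - 1).choose (k - 1) : ℚ))) * X ^ k *
          (X + 1) ^ (p - 2 * k))
      = - (X * Aux (p - 2)) := by
    rw [Finset.sum_range_succ' (fun k => Polynomial.C ((-1 : ℚ) ^ k *
        (if k = 0 then 0 else ((p - k - 1).choose (k - 1) : ℚ))) * X ^ k *
        (X + 1) ^ (p - 2 * k)) M]
    simp only [if_neg (Nat.succ_ne_zero _), eq_self_iff_true, if_true, mul_zero,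
      Polynomial.C_0, zero_mul, add_zero]
    have hterm : ∀ j ∈ Finset.range M,
        Polynomial.C ((-1 : ℚ) ^ (j+1) * ((p - (j+1) - 1).choose ((j+1) - 1) : ℚ)) *
          X ^ (j+1) * (X + 1) ^ (p - 2 * (j+1))
        = - (X * (Polynomial.C ((-1 : ℚ) ^ j * (((p-2) - j).choose j : ℚ)) * X ^ j *
            (X + 1) ^ ((p-2) - 2 * j))) := by
      intro j hj
      have e1 : p - (j+1) - 1 = (p - 2) - j := by omega
      have e2 : (j+1) - 1 = j := by omega
      have e3 : p - 2 * (j+1) = (p - 2) - 2 * j := by omega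
      rw [e1, e2, e3, pow_succ]
      simp only [Polynomial.C_mul, Polynomial.C_pow, Polynomial.C_neg, Polynomial.C_1]
      ring
    rw [Finset.sum_congr rfl hterm, Finset.sum_neg_distrib, ← Finset.mul_sum]
    congr 2
    unfold Aux
    apply Finset.sum_subset
    · intro x hx
      simp only [Finset.mem_range] at hx ⊢
      omega
    · intro x hx hx'
      simp only [Finset.mem_range] at hx hx'
      have : ((p - 2) - x).choose x = 0 := Nat.choose_eq_zero_of_lt (by omega)
      simp [this]
  rw [hS1, hS2, Aux_eq_geom, Aux_eq_geom]
  have hp2 : p - 2 + 1 = p - 1 := by omega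
  rw [hp2]
  rw [show p + 1 = (p - 1) + 1 + 1 by omega,
    Finset.sum_range_succ (fun j => (X : ℚ[X]) ^ j) ((p - 1) + 1),
    Finset.sum_range_succ' (fun j => (X : ℚ[X]) ^ j) (p - 1)]
  rw [show p - 1 + 1 = p by omega, Finset.mul_sum]
  simp only [pow_succ', pow_zero]
  ring
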